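/- Let G be a finite graph with minimum degree at least m, let u and v be vertices of G at distance L, and let P be a shortest path from u to v (so P has length L). Then the set of vertices of G that have at least one neighbor on P has size at least m · (⌊L/3⌋ + 1). -/

import Mathlib

open SimpleGraph

section aux

variable {V : Type*} {G : SimpleGraph V}

lemma aux_getVert_mem_support {u v : V} (p : G.Walk u v) (i : ℕ) :
    p.getVert i ∈ p.support := by
  induction p generalizing i with
  | nil => simp [SimpleGraph.Walk.getVert]
  | cons h q ih =>
    cases i with
    | zero => simp
    | succ n => simp only [SimpleGraph.Walk.getVert_cons_succ, SimpleGraph.Walk.support_cons,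
        List.mem_cons]; exact Or.inr (ih n)

lemma aux_length_drop {u v : V} (p : G.Walk u v) (n : ℕ) :
    (p.drop n).length = p.length - n := by
  induction p generalizing n with
  | nil => simp [SimpleGraph.Walk.drop]
  | cons h q ih =>
    cases n with
    | zero => rfl
    | succ m =>
      simp only [SimpleGraph.Walk.drop, SimpleGraph.Walk.length_copy,
        SimpleGraph.Walk.length_cons]
      exact (ih m).trans (by omega)

lemma aux_dist_start_getVert {u v : V} (p : G.Walk u v) (i : ℕ) (hi : i ≤ p.length) :
    G.dist u (p.getVert i) ≤ i := by
  have h1 : p.reverse.getVert (p.length - i) = p.getVert i := by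
    rw [SimpleGraph.Walk.getVert_reverse]
    congr 1
    omega
  set q := (p.reverse.drop (p.length - i)) with hq
  have : G.dist (p.getVert i) u ≤ q.length := h1 ▸ SimpleGraph.dist_le q
  rw [aux_length_drop, SimpleGraph.Walk.length_reverse] at this
  rw [SimpleGraph.dist_comm]
  omega

lemma aux_dist_getVert_end {u v : V} (p : G.Walk u v) (i : ℕ) :
    G.dist (p.getVert i) v ≤ p.length - i := by
  have := SimpleGraph.dist_le (p.drop i)
  rwa [aux_length_drop] at this

end aux

/-- If `G` has minimum degree at least `m` and `P` is a shortest path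
between two vertices at distance `L`, then the set of vertices with a neighbor on `P`
has size at least `m * (⌊L/3⌋ + 1)`. -/
theorem neighbors_of_geodesic_lower_bound {V : Type*} [Fintype V]
    (G : SimpleGraph V) (m : ℕ) (hdeg : ∀ v : V, m ≤ (G.neighborSet v).ncard)
    (u v : V) (L : ℕ) (hdist : G.dist u v = L)
    (P : G.Walk u v) (hpath : P.IsPath) (hlen : P.length = L) :
    m * (L / 3 + 1) ≤ {w : V | ∃ x ∈ P.support, G.Adj w x}.ncard := by
  classical
  set x : ℕ → V := fun k => P.getVert (3 * k) with hx
  -- walk from u to a marked vertex, of controlled length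
  have hQ1 : ∀ a : ℕ, 3 * a ≤ L → ∃ Q : G.Walk u (x a), Q.length = 3 * a := by
    intro a ha
    have h1 : P.reverse.getVert (L - 3 * a) = x a := by
      rw [SimpleGraph.Walk.getVert_reverse, hlen]
      simp only [hx]
      congr 1
      omega
    refine ⟨((P.reverse.drop (L - 3 * a)).copy h1 rfl).reverse, ?_⟩
    rw [SimpleGraph.Walk.length_reverse, SimpleGraph.Walk.length_copy,
      aux_length_drop, SimpleGraph.Walk.length_reverse, hlen]
    omega
  -- disjointness of neighborhoods
  have hdisj : ∀ a ∈ Finset.range (L / 3 + 1), ∀ b ∈ Finset.range (L / 3 + 1), a ≠ b →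
      Disjoint (G.neighborFinset (x a)) (G.neighborFinset (x b)) := by
    intro a ha b hb hab
    simp only [Finset.mem_range] at ha hb
    rw [Finset.disjoint_left]
    intro w hwa hwb
    rw [SimpleGraph.mem_neighborFinset] at hwa hwb
    have key : ∀ c d : ℕ, c < d → d ≤ L / 3 → G.Adj (x c) w → G.Adj (x d) w → False := by
      intro c d hcd hd h1 h2
      have h3c : 3 * c ≤ L := by have := Nat.div_mul_le_self L 3; omega
      have h3d : 3 * d ≤ L := by have := Nat.div_mul_le_self L 3; omega
      obtain ⟨Q1, hQ1len⟩ := hQ1 c h3c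
      have hQ3len : (P.drop (3 * d)).length = L - 3 * d := by
        rw [aux_length_drop, hlen]
      set W : G.Walk u v :=
        Q1.append (SimpleGraph.Walk.cons h1 (SimpleGraph.Walk.cons h2.symm (P.drop (3 * d))))
        with hW
      have := SimpleGraph.dist_le W
      rw [hdist, hW, SimpleGraph.Walk.length_append, SimpleGraph.Walk.length_cons,
        SimpleGraph.Walk.length_cons, hQ1len, hQ3len] at this
      omega
    rcases Nat.lt_or_ge a b with h | h
    · exact key a b h (by omega) hwa hwb
    · exact key b a (by omega) (by omega) hwb hwa
  -- sum over the biUnion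
  set S := {w : V | ∃ x ∈ P.support, G.Adj w x} with hS
  have hsub : (Finset.range (L / 3 + 1)).biUnion (fun k => G.neighborFinset (x k)) ⊆
      S.toFinset := by
    intro w hw
    rw [Finset.mem_biUnion] at hw
    obtain ⟨k, -, hwk⟩ := hw
    rw [SimpleGraph.mem_neighborFinset] at hwk
    rw [Set.mem_toFinset]
    exact ⟨x k, aux_getVert_mem_support P _, hwk.symm⟩
  have hcard : m * (L / 3 + 1) ≤
      ((Finset.range (L / 3 + 1)).biUnion (fun k => G.neighborFinset (x k))).card := by
    rw [Finset.card_biUnion hdisj]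
    calc m * (L / 3 + 1) = ∑ _k ∈ Finset.range (L / 3 + 1), m := by
          rw [Finset.sum_const, Finset.card_range]; ring
      _ ≤ ∑ k ∈ Finset.range (L / 3 + 1), (G.neighborFinset (x k)).card := by
          apply Finset.sum_le_sum
          intro k _
          have := hdeg (x k)
          rwa [Set.ncard_eq_toFinset_card'] at this
  calc m * (L / 3 + 1) ≤ _ := hcard
    _ ≤ S.toFinset.card := Finset.card_le_card hsub
    _ = S.ncard := (Set.ncard_eq_toFinset_card' S).symm
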